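/- arXiv:1907.01258 — 4 statements merged into one kernel-verified Lean document; each statement's English description precedes it below -/
import Mathlib

section
/- For any positive integers k ≤ N and any integers 0 < y₁ < y₂ < ⋯ < y_k ≤ N, the sum ⌈log₂(y₁+1)⌉ + ⌈log₂(y₂−y₁+1)⌉ + ⋯ + ⌈log₂(y_k−y_{k−1}+1)⌉ + k is at most k·log₂(N/k + 1) + 2k. -/
/-- Basic encoding size bound: for `0 = y 0 < y 1 < ⋯ < y k ≤ N`, the sum
`∑ ⌈log₂(y(i+1) − y i + 1)⌉ + k` is at most `k·log₂(N/k + 1) + 2k`. -/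
theorem stmt0 (N k : ℕ) (hk : 0 < k) (hkN : k ≤ N) (y : ℕ → ℕ)
    (hy0 : y 0 = 0) (hmono : ∀ i < k, y i < y (i + 1)) (hyN : y k ≤ N) :
    (∑ i ∈ Finset.range k, (⌈Real.logb 2 ((y (i + 1) - y i + 1 : ℕ) : ℝ)⌉ : ℝ)) + k
      ≤ k * Real.logb 2 ((N : ℝ) / k + 1) + 2 * k := by
  have hkR : (0 : ℝ) < k := by exact_mod_cast hk
  set z : ℕ → ℝ := fun i => ((y (i + 1) - y i + 1 : ℕ) : ℝ) with hzdef
  have hzeq : ∀ i ∈ Finset.range k, z i = (y (i + 1) : ℝ) - y i + 1 := by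
    intro i hi
    have h := (hmono i (Finset.mem_range.mp hi)).le
    simp only [hzdef]
    push_cast [Nat.cast_sub h]
    ring
  have hzpos : ∀ i ∈ Finset.range k, 0 < z i := by
    intro i hi
    have h := hmono i (Finset.mem_range.mp hi)
    rw [hzeq i hi]
    have : (y i : ℝ) < y (i + 1) := by exact_mod_cast h
    linarith
  have hS : ∑ i ∈ Finset.range k, z i = (y k : ℝ) + k := by
    rw [Finset.sum_congr rfl hzeq, Finset.sum_add_distrib,
      Finset.sum_range_sub (fun i => (y i : ℝ))]
    simp [hy0]
  set A : ℝ := ((y k : ℝ) + k) / k with hAdef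
  have hApos : 0 < A := by positivity
  -- Jensen via log x ≤ x - 1
  have key : ∑ i ∈ Finset.range k, Real.log (z i) ≤ k * Real.log A := by
    have h1 : ∀ i ∈ Finset.range k, Real.log (z i) - Real.log A ≤ z i / A - 1 := by
      intro i hi
      rw [← Real.log_div (hzpos i hi).ne' hApos.ne']
      exact Real.log_le_sub_one_of_pos (div_pos (hzpos i hi) hApos)
    have h2 := Finset.sum_le_sum h1
    rw [Finset.sum_sub_distrib, Finset.sum_sub_distrib, ← Finset.sum_div, hS] at h2
    have hAne : A ≠ 0 := hApos.ne'
    have : ((y k : ℝ) + k) / A = k := by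
      field_simp [hAdef]
      rw [hAdef]; field_simp
    rw [this] at h2
    simp only [Finset.sum_const, Finset.card_range, nsmul_eq_mul, mul_one] at h2
    linarith
  have hlog2 : (0 : ℝ) < Real.log 2 := Real.log_pos (by norm_num)
  have hsumlogb : ∑ i ∈ Finset.range k, Real.logb 2 (z i) ≤ k * Real.logb 2 A := by
    simp only [Real.logb, ← Finset.sum_div]
    rw [div_le_iff₀ hlog2]
    calc ∑ i ∈ Finset.range k, Real.log (z i) ≤ k * Real.log A := key
      _ = k * (Real.log A / Real.log 2) * Real.log 2 := by field_simp
  have hAle : Real.logb 2 A ≤ Real.logb 2 ((N : ℝ) / k + 1) := by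
    apply Real.logb_le_logb_of_le (by norm_num) hApos
    rw [hAdef, div_add' _ _ _ hkR.ne']
    apply div_le_div_of_nonneg_right ?_ hkR.le
    have : (y k : ℝ) ≤ N := by exact_mod_cast hyN
    linarith
  have hceil : ∀ i ∈ Finset.range k,
      (⌈Real.logb 2 (z i)⌉ : ℝ) ≤ Real.logb 2 (z i) + 1 := fun i _ =>
    (Int.ceil_lt_add_one _).le
  calc (∑ i ∈ Finset.range k, (⌈Real.logb 2 (z i)⌉ : ℝ)) + k
      ≤ (∑ i ∈ Finset.range k, (Real.logb 2 (z i) + 1)) + k :=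
        add_le_add_left (Finset.sum_le_sum hceil) _
    _ = (∑ i ∈ Finset.range k, Real.logb 2 (z i)) + k + k := by
        rw [Finset.sum_add_distrib]; simp
    _ ≤ k * Real.logb 2 A + k + k := by linarith
    _ ≤ k * Real.logb 2 ((N : ℝ) / k + 1) + 2 * k := by
        nlinarith [mul_le_mul_of_nonneg_left hAle hkR.le]
end

section
/- For any positive integers k ≤ N, the sum over l = 0, 1, …, ⌊log₂ k⌋ of (2^l · log₂((N + 2^l)/2^l) + 2^{l+1}) is at most 2k·log₂(N/k + 1) + 8k. -/
open Finset Real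

private lemma sum_two_pow (n : ℕ) : ∑ l ∈ Finset.range n, 2 ^ l = 2 ^ n - 1 := by
  induction n with
  | zero => simp
  | succ n ih =>
    rw [Finset.sum_range_succ, ih]
    have : 1 ≤ 2 ^ n := Nat.one_le_two_pow
    omega

private lemma aux_sum (m : ℕ) :
    ∑ l ∈ Finset.range (m + 1), 2 ^ l * (m + 1 - l) ≤ 2 ^ (m + 2) := by
  induction m with
  | zero => simp
  | succ m ih =>
    rw [Finset.sum_range_succ]
    have h1 : ∑ l ∈ Finset.range (m + 1), 2 ^ l * (m + 2 - l)
        = ∑ l ∈ Finset.range (m + 1), (2 ^ l * (m + 1 - l) + 2 ^ l) := by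
      refine Finset.sum_congr rfl fun l hl => ?_
      have : l < m + 1 := Finset.mem_range.mp hl
      have h2 : m + 2 - l = (m + 1 - l) + 1 := by omega
      rw [h2]; ring
    rw [h1, Finset.sum_add_distrib, sum_two_pow]
    have h5 : m + 1 + 1 - (m + 1) = 1 := by omega
    rw [h5, mul_one]
    calc ∑ l ∈ Finset.range (m + 1), 2 ^ l * (m + 1 - l) + (2 ^ (m + 1) - 1) + 2 ^ (m + 1)
        ≤ 2 ^ (m + 2) + 2 ^ (m + 1) + 2 ^ (m + 1) := by
          gcongr <;> first | exact ih | exact Nat.sub_le _ _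
      _ = 2 ^ (m + 1 + 2) := by ring

/-- Efficient encoding size bound:
`∑_{l=0}^{⌊log₂ k⌋} (2^l · log₂((N + 2^l)/2^l) + 2^{l+1}) ≤ 2k·log₂(N/k + 1) + 8k`. -/
theorem stmt1 (N k : ℕ) (hk : 0 < k) (hkN : k ≤ N) :
    ∑ l ∈ Finset.range (Nat.log 2 k + 1),
        ((2 : ℝ) ^ l * Real.logb 2 (((N : ℝ) + 2 ^ l) / 2 ^ l) + 2 ^ (l + 1))
      ≤ 2 * k * Real.logb 2 ((N : ℝ) / k + 1) + 8 * k := by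
  set m := Nat.log 2 k with hm
  have hm1 : 2 ^ m ≤ k := Nat.pow_log_le_self 2 hk.ne'
  have hm2 : k < 2 ^ (m + 1) := Nat.lt_pow_succ_log_self one_lt_two k
  have hk0 : (0 : ℝ) < k := by exact_mod_cast hk
  have hN0 : (0 : ℝ) ≤ N := Nat.cast_nonneg N
  have hlogb0 : 0 ≤ Real.logb 2 ((N : ℝ) / k + 1) := by
    apply Real.logb_nonneg one_lt_two
    have : (0:ℝ) ≤ (N:ℝ)/k := by positivity
    linarith
  have key : ∀ l ∈ Finset.range (m + 1),
      (2 : ℝ) ^ l * Real.logb 2 (((N : ℝ) + 2 ^ l) / 2 ^ l) + 2 ^ (l + 1)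
      ≤ (2 : ℝ) ^ l * Real.logb 2 ((N : ℝ) / k + 1)
        + ((2 ^ l * (m + 1 - l) : ℕ) : ℝ) + 2 ^ (l + 1) := by
    intro l hl
    have hlm : l ≤ m := Nat.lt_succ_iff.mp (Finset.mem_range.mp hl)
    have h2l : (0 : ℝ) < 2 ^ l := by positivity
    have hpow : (2 : ℝ) ^ (m + 1 - l) * 2 ^ l = 2 ^ (m + 1) := by
      rw [← pow_add]; congr 1; omega
    have harg : ((N : ℝ) + 2 ^ l) / 2 ^ l ≤ ((N : ℝ) / k + 1) * 2 ^ (m + 1 - l) := by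
      rw [div_le_iff₀ h2l, mul_assoc, hpow]
      have h1 : ((N : ℝ) / k + 1) = ((N : ℝ) + k) / k := by field_simp
      rw [h1, div_mul_eq_mul_div, le_div_iff₀ hk0]
      have hnat : (N + 2 ^ l) * k ≤ (N + k) * 2 ^ (m + 1) := by
        have h2lk : 2 ^ l ≤ k := le_trans (Nat.pow_le_pow_right (by norm_num) hlm) hm1
        calc (N + 2 ^ l) * k ≤ (N + k) * k := by nlinarith
          _ ≤ (N + k) * 2 ^ (m + 1) := Nat.mul_le_mul_left _ hm2.le
      calc ((N : ℝ) + 2 ^ l) * k = (((N + 2 ^ l) * k : ℕ) : ℝ) := by push_cast; ring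
        _ ≤ (((N + k) * 2 ^ (m + 1) : ℕ) : ℝ) := by exact_mod_cast hnat
        _ = ((N : ℝ) + k) * 2 ^ (m + 1) := by push_cast; ring
    have hpos : (0 : ℝ) < ((N : ℝ) + 2 ^ l) / 2 ^ l := by positivity
    have hlogle : Real.logb 2 (((N : ℝ) + 2 ^ l) / 2 ^ l)
        ≤ Real.logb 2 ((N : ℝ) / k + 1) + (m + 1 - l : ℕ) := by
      calc Real.logb 2 (((N : ℝ) + 2 ^ l) / 2 ^ l)
          ≤ Real.logb 2 (((N : ℝ) / k + 1) * 2 ^ (m + 1 - l)) :=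
            Real.logb_le_logb_of_le one_lt_two hpos harg
        _ = Real.logb 2 ((N : ℝ) / k + 1) + (m + 1 - l : ℕ) := by
            rw [Real.logb_mul (by positivity) (by positivity), Real.logb_pow,
              Real.logb_self_eq_one (by norm_num : (1:ℝ) < 2)]
            ring
    have := mul_le_mul_of_nonneg_left hlogle h2l.le
    have hcast : (2 : ℝ) ^ l * ((m + 1 - l : ℕ) : ℝ) = ((2 ^ l * (m + 1 - l) : ℕ) : ℝ) := by
      push_cast; ring
    nlinarith [this, hcast]
  have hsum := Finset.sum_le_sum key
  refine le_trans hsum ?_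
  rw [Finset.sum_add_distrib, Finset.sum_add_distrib, ← Finset.sum_mul]
  have hg1 : ∑ l ∈ Finset.range (m + 1), (2 : ℝ) ^ l = ((2 ^ (m + 1) - 1 : ℕ) : ℝ) := by
    rw [← sum_two_pow]; push_cast; rfl
  have hg2 : ∑ l ∈ Finset.range (m + 1), ((2 ^ l * (m + 1 - l) : ℕ) : ℝ)
      = ((∑ l ∈ Finset.range (m + 1), 2 ^ l * (m + 1 - l) : ℕ) : ℝ) := by
    push_cast; rfl
  have hg3 : ∑ l ∈ Finset.range (m + 1), (2 : ℝ) ^ (l + 1)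
      = 2 * ((2 ^ (m + 1) - 1 : ℕ) : ℝ) := by
    rw [← hg1, Finset.mul_sum]
    refine Finset.sum_congr rfl fun l _ => by ring
  rw [hg1, hg2, hg3]
  have hb1 : ((2 ^ (m + 1) - 1 : ℕ) : ℝ) ≤ 2 * k := by
    have : 2 ^ (m + 1) - 1 ≤ 2 * k := by
      have : 2 ^ (m + 1) = 2 * 2 ^ m := by ring
      omega
    exact_mod_cast this
  have hb2 : ((∑ l ∈ Finset.range (m + 1), 2 ^ l * (m + 1 - l) : ℕ) : ℝ) ≤ 4 * k := by
    have h4 : (∑ l ∈ Finset.range (m + 1), 2 ^ l * (m + 1 - l)) ≤ 4 * k := by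
      refine le_trans (aux_sum m) ?_
      have : 2 ^ (m + 2) = 4 * 2 ^ m := by ring
      omega
    exact_mod_cast h4
  have hbk : (0:ℝ) ≤ ((2 ^ (m + 1) - 1 : ℕ) : ℝ) := Nat.cast_nonneg _
  nlinarith [mul_le_mul_of_nonneg_right hb1 hlogb0]
end

section
/- Let T : ℤ → ℝ≥0 satisfy T(s) ≤ p for all s ≤ 0 and T(s) ≤ max(2·T(s−3), T(s−2) + T(s−5)) for all s > 0, where p > 0 is a constant. Then T(s) ≤ C·2^{s/3}·p for all s ≥ 0, for some universal constant C. -/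
private lemma cube3 : ((2:ℝ) ^ ((1:ℝ)/3)) ^ (3:ℕ) = 2 := by
  rw [← Real.rpow_natCast ((2:ℝ) ^ ((1:ℝ)/3)) 3, ← Real.rpow_mul (by norm_num)]
  norm_num

private lemma cube_lb : (5/4 : ℝ) ≤ (2:ℝ) ^ ((1:ℝ)/3) := by
  by_contra hlt
  push_neg at hlt
  have h := pow_lt_pow_left₀ hlt (Real.rpow_nonneg (by norm_num) _) (n := 3) (by norm_num)
  rw [cube3] at h
  norm_num at h

private lemma sq_lb : (3:ℝ) ≤ 2 * ((2:ℝ) ^ ((1:ℝ)/3)) ^ (2:ℕ) := by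
  have h := pow_le_pow_left₀ (by norm_num : (0:ℝ) ≤ 5/4) cube_lb 2
  nlinarith

private lemma pow23 (s : ℝ) : (2:ℝ) ^ ((s-3)/3) * 2 = (2:ℝ) ^ (s/3) := by
  have : (2:ℝ) ^ ((s-3)/3) * (2:ℝ) ^ (1:ℝ) = (2:ℝ) ^ ((s-3)/3 + 1) :=
    (Real.rpow_add (by norm_num) _ _).symm
  rw [Real.rpow_one] at this
  rw [this]
  ring_nf

private lemma powx2 : ((2:ℝ) ^ ((1:ℝ)/3)) ^ (2:ℕ) = (2:ℝ) ^ ((2:ℝ)/3) := by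
  rw [← Real.rpow_natCast ((2:ℝ) ^ ((1:ℝ)/3)) 2, ← Real.rpow_mul (by norm_num)]
  norm_num

private lemma pow25 (s : ℝ) : (2:ℝ) ^ ((s-2)/3) + (2:ℝ) ^ ((s-5)/3) ≤ (2:ℝ) ^ (s/3) := by
  set x : ℝ := (2:ℝ) ^ ((1:ℝ)/3) with hx
  set A : ℝ := (2:ℝ) ^ ((s-2)/3) with hA
  set B : ℝ := (2:ℝ) ^ ((s-5)/3) with hB
  set P : ℝ := (2:ℝ) ^ (s/3) with hP
  have hApos : 0 < A := Real.rpow_pos_of_pos (by norm_num) _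
  have hBpos : 0 < B := Real.rpow_pos_of_pos (by norm_num) _
  have hPpos : 0 < P := Real.rpow_pos_of_pos (by norm_num) _
  have hxpos : 0 < x := Real.rpow_pos_of_pos (by norm_num) _
  have hA2 : A * x ^ (2:ℕ) = P := by
    rw [hA, hP, powx2, ← Real.rpow_add (by norm_num)]
    ring_nf
  have hB2 : B * (2 * x ^ (2:ℕ)) = P := by
    have h53 : (2:ℝ) * x ^ (2:ℕ) = (2:ℝ) ^ ((5:ℝ)/3) := by
      rw [powx2]
      have : (2:ℝ) * (2:ℝ) ^ ((2:ℝ)/3) = (2:ℝ) ^ (1:ℝ) * (2:ℝ) ^ ((2:ℝ)/3) := by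
        rw [Real.rpow_one]
      rw [this, ← Real.rpow_add (by norm_num)]
      norm_num
    rw [hB, hP, h53, ← Real.rpow_add (by norm_num)]
    ring_nf
  have hsq := sq_lb
  rw [← hx] at hsq
  have key : (A + B) * (2 * x ^ (2:ℕ)) ≤ P * (2 * x ^ (2:ℕ)) := by
    have : (A + B) * (2 * x ^ (2:ℕ)) = 3 * P := by nlinarith [hA2, hB2]
    rw [this]
    nlinarith
  have hxx : 0 < 2 * x ^ (2:ℕ) := by positivity
  exact le_of_mul_le_mul_right key hxx

/-- Eppstein recurrence: if `T s ≤ p` for `s ≤ 0` and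
`T s ≤ max (2·T(s−3)) (T(s−2) + T(s−5))` for `s > 0`, then `T s ≤ C·2^(s/3)·p` for all
`s ≥ 0`, for a universal constant `C`. -/
theorem stmt6 :
    ∃ C : ℝ, 0 < C ∧
      ∀ (T : ℤ → ℝ) (p : ℝ), 0 < p → (∀ s, 0 ≤ T s) → (∀ s ≤ 0, T s ≤ p) →
        (∀ s > 0, T s ≤ max (2 * T (s - 3)) (T (s - 2) + T (s - 5))) →
        ∀ s ≥ 0, T s ≤ C * (2 : ℝ) ^ ((s : ℝ) / 3) * p := by
  refine ⟨(2:ℝ) ^ ((5:ℝ)/3), Real.rpow_pos_of_pos (by norm_num) _, ?_⟩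
  intro T p hp hT0 hbase hrec
  set C : ℝ := (2:ℝ) ^ ((5:ℝ)/3) with hC
  have hCpos : 0 < C := Real.rpow_pos_of_pos (by norm_num) _
  have key : ∀ n : ℕ, T ((n:ℤ) - 5) ≤ C * (2:ℝ) ^ (((n:ℝ) - 5)/3) * p := by
    intro n
    induction n using Nat.strong_induction_on with
    | _ n ih =>
      by_cases h : (n:ℤ) - 5 ≤ 0
      · have h1 : T ((n:ℤ) - 5) ≤ p := hbase _ h
        have h2 : (1:ℝ) ≤ C * (2:ℝ) ^ (((n:ℝ) - 5)/3) := by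
          rw [hC, ← Real.rpow_add (by norm_num)]
          have hexp : (0:ℝ) ≤ 5/3 + ((n:ℝ) - 5)/3 := by
            have : (0:ℝ) ≤ (n:ℝ) := Nat.cast_nonneg n
            linarith
          calc (1:ℝ) = (2:ℝ) ^ (0:ℝ) := by norm_num
            _ ≤ _ := Real.rpow_le_rpow_of_exponent_le (by norm_num) hexp
        nlinarith
      · push_neg at h
        have hn6 : 6 ≤ n := by omega
        have ih3 := ih (n-3) (by omega)
        have ih2 := ih (n-2) (by omega)
        have ih5 := ih (n-5) (by omega)
        have c3 : ((n-3:ℕ):ℤ) = (n:ℤ) - 3 := by omega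
        have c2 : ((n-2:ℕ):ℤ) = (n:ℤ) - 2 := by omega
        have c5 : ((n-5:ℕ):ℤ) = (n:ℤ) - 5 := by omega
        have r3 : ((n-3:ℕ):ℝ) = (n:ℝ) - 3 := by
          have h' : 3 ≤ n := by omega
          push_cast [h']; ring
        have r2 : ((n-2:ℕ):ℝ) = (n:ℝ) - 2 := by
          have h' : 2 ≤ n := by omega
          push_cast [h']; ring
        have r5 : ((n-5:ℕ):ℝ) = (n:ℝ) - 5 := by
          have h' : 5 ≤ n := by omega
          push_cast [h']; ring
        rw [c3, r3] at ih3
        rw [c2, r2] at ih2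
        rw [c5, r5] at ih5
        have hr := hrec _ h
        rw [show (n:ℤ) - 5 - 3 = (n:ℤ) - 3 - 5 by ring,
            show (n:ℤ) - 5 - 2 = (n:ℤ) - 2 - 5 by ring] at hr
        have b1 : 2 * T ((n:ℤ) - 3 - 5) ≤ C * (2:ℝ) ^ (((n:ℝ) - 5)/3) * p := by
          have hpw := pow23 ((n:ℝ) - 5)
          rw [show (n:ℝ) - 5 - 3 = (n:ℝ) - 3 - 5 by ring] at hpw
          calc 2 * T ((n:ℤ) - 3 - 5) ≤ 2 * (C * (2:ℝ) ^ (((n:ℝ) - 3 - 5)/3) * p) := by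
                linarith
            _ = C * ((2:ℝ) ^ (((n:ℝ) - 3 - 5)/3) * 2) * p := by ring
            _ = C * (2:ℝ) ^ (((n:ℝ) - 5)/3) * p := by rw [hpw]
        have b2 : T ((n:ℤ) - 2 - 5) + T ((n:ℤ) - 5 - 5) ≤ C * (2:ℝ) ^ (((n:ℝ) - 5)/3) * p := by
          have hpw := pow25 ((n:ℝ) - 5)
          rw [show (n:ℝ) - 5 - 2 = (n:ℝ) - 2 - 5 by ring] at hpw
          calc T ((n:ℤ) - 2 - 5) + T ((n:ℤ) - 5 - 5)
              ≤ C * (2:ℝ) ^ (((n:ℝ) - 2 - 5)/3) * p + C * (2:ℝ) ^ (((n:ℝ) - 5 - 5)/3) * p :=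
                add_le_add ih2 ih5
            _ = C * ((2:ℝ) ^ (((n:ℝ) - 2 - 5)/3) + (2:ℝ) ^ (((n:ℝ) - 5 - 5)/3)) * p := by ring
            _ ≤ C * (2:ℝ) ^ (((n:ℝ) - 5)/3) * p := by
                have := mul_le_mul_of_nonneg_left hpw hCpos.le
                nlinarith
        calc T ((n:ℤ) - 5) ≤ _ := hr
          _ ≤ _ := max_le b1 b2
  intro s hs
  have hn : s = ((s + 5).toNat : ℤ) - 5 := by omega
  have hk := key (s + 5).toNat
  rw [← hn] at hk
  have hcast : (((s + 5).toNat : ℝ)) - 5 = (s:ℝ) := by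
    have h1 : ((s + 5).toNat : ℤ) = s + 5 := by omega
    have h2 := congrArg (Int.cast : ℤ → ℝ) h1
    push_cast at h2
    linarith
  rwa [hcast] at hk
end

section
/- Let T : ℤ → ℝ≥0 satisfy T(r) ≤ max(2·T(r−1), t²·2^Δ·T(r−Δ)) for r > 0 and T(r) ≤ p for r ≤ 0, where Δ ≥ 1 is an integer, t = 3Δ, and p > 0. Then T(r) ≤ C·(2·t^{2/Δ})^r·p for all r ≥ 0, for some constant C depending only on Δ. -/
/-- Schöning/Moser recurrence: with `t = 3Δ`, if `T r ≤ p` for `r ≤ 0` and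
`T r ≤ max (2·T(r−1)) (t²·2^Δ·T(r−Δ))` for `r > 0`, then
`T r ≤ C·(2·t^(2/Δ))^r·p` for all `r ≥ 0`, with `C` depending only on `Δ`. -/
theorem stmt8 (Δ : ℕ) (hΔ : 1 ≤ Δ) :
    ∃ C : ℝ, 0 < C ∧
      ∀ (T : ℤ → ℝ) (p : ℝ), 0 < p → (∀ r, 0 ≤ T r) → (∀ r ≤ 0, T r ≤ p) →
        (∀ r > 0, T r ≤ max (2 * T (r - 1))
          ((3 * (Δ : ℝ)) ^ 2 * 2 ^ Δ * T (r - (Δ : ℤ)))) →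
        ∀ r ≥ 0, T r ≤ C * (2 * (3 * (Δ : ℝ)) ^ (2 / (Δ : ℝ))) ^ ((r : ℤ) : ℝ) * p := by
  set b : ℝ := 2 * (3 * (Δ : ℝ)) ^ (2 / (Δ : ℝ)) with hbdef
  have hΔR : (1 : ℝ) ≤ (Δ : ℝ) := by exact_mod_cast hΔ
  have hΔ0 : (Δ : ℝ) ≠ 0 := by positivity
  have hx1 : (1 : ℝ) ≤ 3 * (Δ : ℝ) := by nlinarith
  have hx0 : (0 : ℝ) ≤ 3 * (Δ : ℝ) := by linarith
  have hr1 : (1 : ℝ) ≤ (3 * (Δ : ℝ)) ^ (2 / (Δ : ℝ)) := by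
    calc (1 : ℝ) = (3 * (Δ : ℝ)) ^ (0 : ℝ) := (Real.rpow_zero _).symm
    _ ≤ (3 * (Δ : ℝ)) ^ (2 / (Δ : ℝ)) :=
      Real.rpow_le_rpow_of_exponent_le hx1 (by positivity)
  have hb2 : (2 : ℝ) ≤ b := by nlinarith
  have hb1 : (1 : ℝ) ≤ b := by linarith
  have hb0 : (0 : ℝ) < b := by linarith
  have hbne : b ≠ 0 := ne_of_gt hb0
  -- key identity
  have hbΔ : b ^ (Δ : ℤ) = (3 * (Δ : ℝ)) ^ 2 * 2 ^ Δ := by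
    rw [zpow_natCast, hbdef, mul_pow, ← Real.rpow_natCast ((3 * (Δ:ℝ)) ^ (2 / (Δ:ℝ))) Δ,
      ← Real.rpow_mul hx0, div_mul_cancel₀ _ hΔ0]
    rw [show ((2:ℝ)) = ((2:ℕ):ℝ) by norm_num, Real.rpow_natCast]
    ring
  refine ⟨b ^ (Δ : ℤ), zpow_pos hb0 _, ?_⟩
  intro T p hp hT0 hbase hrec r hr
  -- reduce rpow to zpow
  have hkey : ∀ n : ℕ, ∀ r : ℤ, 0 ≤ r → r ≤ n → T r ≤ b ^ (Δ : ℤ) * b ^ r * p := by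
    intro n
    induction n with
    | zero =>
      intro r hr0 hrn
      have hre : r = 0 := le_antisymm (by exact_mod_cast hrn) hr0
      subst hre
      have h1 : (1:ℝ) ≤ b ^ (Δ:ℤ) := one_le_zpow₀ hb1 (Int.natCast_nonneg Δ)
      simp only [zpow_zero, mul_one]
      calc T 0 ≤ p := hbase 0 le_rfl
        _ = 1 * p := (one_mul p).symm
        _ ≤ b ^ (Δ:ℤ) * p := mul_le_mul_of_nonneg_right h1 hp.le
    | succ n ih =>
      intro r hr0 hrn
      rcases le_or_gt r n with h | h
      · exact ih r hr0 h
      · have hrpos : 0 < r := by omega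
        have hrn1 : r = (n : ℤ) + 1 := by omega
        have hrec' := hrec r hrpos
        have hzr1 : (1:ℝ) ≤ b ^ r := one_le_zpow₀ hb1 hr0
        rcases le_total (2 * T (r - 1)) ((3 * (Δ : ℝ)) ^ 2 * 2 ^ Δ * T (r - (Δ : ℤ))) with hc | hc
        · -- dominated by the Δ-branch
          have h1 : T r ≤ (3 * (Δ : ℝ)) ^ 2 * 2 ^ Δ * T (r - (Δ : ℤ)) := by
            rw [max_eq_right hc] at hrec'; exact hrec'
          rw [← hbΔ] at h1
          rcases le_or_gt 0 (r - (Δ : ℤ)) with hd | hd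
          · have h2 := ih (r - Δ) hd (by omega)
            have hCpos : (0:ℝ) < b ^ (Δ : ℤ) := zpow_pos hb0 _
            calc T r ≤ b ^ (Δ:ℤ) * (b ^ (Δ:ℤ) * b ^ (r - Δ) * p) := by
                  exact le_trans h1 (by
                    have := mul_le_mul_of_nonneg_left h2 (le_of_lt hCpos)
                    linarith)
              _ = b ^ (Δ:ℤ) * b ^ r * p := by
                  rw [show b ^ (Δ:ℤ) * (b ^ (Δ:ℤ) * b ^ (r - Δ) * p)
                      = b ^ (Δ:ℤ) * (b ^ (Δ:ℤ) * b ^ (r - Δ)) * p by ring,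
                    ← zpow_add₀ hbne]
                  ring_nf
          · have h2 : T (r - Δ) ≤ p := hbase _ (by omega)
            have hCpos : (0:ℝ) < b ^ (Δ : ℤ) := zpow_pos hb0 _
            calc T r ≤ b ^ (Δ:ℤ) * p := le_trans h1
                  (mul_le_mul_of_nonneg_left h2 (le_of_lt hCpos))
              _ = b ^ (Δ:ℤ) * 1 * p := by ring
              _ ≤ b ^ (Δ:ℤ) * b ^ r * p := by
                  exact mul_le_mul_of_nonneg_right
                    (mul_le_mul_of_nonneg_left hzr1 hCpos.le) hp.le
        · -- dominated by the halving branch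
          have h1 : T r ≤ 2 * T (r - 1) := by
            rw [max_eq_left hc] at hrec'; exact hrec'
          have h2 := ih (r - 1) (by omega) (by omega)
          have hCpos : (0:ℝ) < b ^ (Δ : ℤ) := zpow_pos hb0 _
          have h3 : T r ≤ 2 * (b ^ (Δ:ℤ) * b ^ (r-1) * p) := by nlinarith
          have h4 : (2:ℝ) * (b ^ (Δ:ℤ) * b ^ (r-1) * p) ≤ b ^ (Δ:ℤ) * b ^ r * p := by
            have hz : b ^ r = b ^ (r-1) * b := by
              rw [← zpow_add_one₀ hbne]; ring_nf
            rw [hz]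
            have hzp : (0:ℝ) < b ^ (r-1) := zpow_pos hb0 _
            have h5 := mul_le_mul_of_nonneg_left hb2
              (le_of_lt (mul_pos (mul_pos hCpos hzp) hp))
            nlinarith [h5]
          linarith
  have hfin := hkey r.toNat r hr (by omega)
  have hrpow : b ^ ((r : ℤ) : ℝ) = b ^ r := Real.rpow_intCast b r
  calc T r ≤ b ^ (Δ:ℤ) * b ^ r * p := hfin
    _ = b ^ (Δ:ℤ) * b ^ ((r:ℤ):ℝ) * p := by rw [hrpow]
end
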